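/- Let T be a bounded operator with closed range on a complex Hilbert space and let T = U − V be a proper splitting, i.e., ran(U) = ran(T) and ker(U) = ker(V) (equivalently ker(U) = ker(T)). Then (U† T)† = T† U. -/

import Mathlib

open ContinuousLinearMap

/-- `Td` is the Moore–Penrose inverse of `T`. -/
def IsMoorePenroseInverse {H : Type*} [NormedAddCommGroup H] [InnerProductSpace ℂ H]
    [CompleteSpace H] (T Td : H →L[ℂ] H) : Prop :=
  T ∘L Td ∘L T = T ∧ Td ∘L T ∘L Td = Td ∧
    IsSelfAdjoint (T ∘L Td) ∧ IsSelfAdjoint (Td ∘L T)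

/-- Two self-adjoint operators with `P * Q = Q` and `Q * P = P` are equal. -/
lemma aux_proj_eq {H : Type*} [NormedAddCommGroup H] [InnerProductSpace ℂ H]
    [CompleteSpace H] (P Q : H →L[ℂ] H) (hP : IsSelfAdjoint P) (hQ : IsSelfAdjoint Q)
    (hPQ : P * Q = Q) (hQP : Q * P = P) : P = Q := by
  calc P = star P := hP.symm
    _ = star (Q * P) := by rw [hQP]
    _ = star P * star Q := by rw [star_mul]
    _ = P * Q := by rw [hP.star_eq, hQ.star_eq]
    _ = Q := hPQ

/-- Uniqueness of the Moore-Penrose inverse (multiplicative form). -/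
lemma aux_mp_unique {H : Type*} [NormedAddCommGroup H] [InnerProductSpace ℂ H]
    [CompleteSpace H] (A X Y : H →L[ℂ] H)
    (hX1 : A * X * A = A) (hX2 : X * A * X = X)
    (hX3 : star (A * X) = A * X) (hX4 : star (X * A) = X * A)
    (hY1 : A * Y * A = A) (hY2 : Y * A * Y = Y)
    (hY3 : star (A * Y) = A * Y) (hY4 : star (Y * A) = Y * A) : X = Y := by
  rw [star_mul] at hX3 hX4 hY3 hY4
  -- hX3 : star X * star A = A * X, hX4 : star A * star X = X * A, etc.
  have hsAY : star A = star A * (star Y * star A) := by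
    conv_lhs => rw [← hY1]
    simp only [star_mul, mul_assoc]
  have e1 : A * X = A * Y := by
    calc A * X = star X * star A := hX3.symm
      _ = star X * (star A * (star Y * star A)) := by conv_lhs => rw [hsAY]
      _ = (star X * star A) * (star Y * star A) := by noncomm_ring
      _ = (A * X) * (A * Y) := by rw [hX3, hY3]
      _ = (A * X * A) * Y := by noncomm_ring
      _ = A * Y := by rw [hX1]
  have e2 : X * A = Y * A := by
    calc X * A = star A * star X := hX4.symm
      _ = (star A * (star Y * star A)) * star X := by conv_lhs => rw [hsAY]
      _ = (star A * star Y) * (star A * star X) := by noncomm_ring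
      _ = (Y * A) * (X * A) := by rw [hX4, hY4]
      _ = Y * (A * X * A) := by noncomm_ring
      _ = Y * A := by rw [hX1]
  calc X = X * A * X := hX2.symm
    _ = Y * A * X := by rw [e2]
    _ = Y * (A * X) := by rw [mul_assoc]
    _ = Y * (A * Y) := by rw [e1]
    _ = Y * A * Y := by rw [mul_assoc]
    _ = Y := hY2

/-- For a proper splitting `T = U - V` of a closed range operator, `(U† T)† = T† U`. -/
theorem mp_of_Ud_comp_T_eq_Td_comp_U
    {H : Type*} [NormedAddCommGroup H] [InnerProductSpace ℂ H] [CompleteSpace H]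
    (T U V Ud Td X : H →L[ℂ] H)
    (hTcr : IsClosed (LinearMap.range (T : H →ₗ[ℂ] H) : Set H))
    (hsplit : T = U - V)
    (hran : LinearMap.range (U : H →ₗ[ℂ] H) = LinearMap.range (T : H →ₗ[ℂ] H))
    (hker : LinearMap.ker (U : H →ₗ[ℂ] H) = LinearMap.ker (T : H →ₗ[ℂ] H))
    (hUd : IsMoorePenroseInverse U Ud) (hTd : IsMoorePenroseInverse T Td)
    (hX : IsMoorePenroseInverse (Ud ∘L T) X) :
    X = Td ∘L U := by
  obtain ⟨hU1, hU2, hU3, hU4⟩ := hUd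
  obtain ⟨hT1, hT2, hT3, hT4⟩ := hTd
  obtain ⟨hX1, hX2, hX3, hX4⟩ := hX
  simp only [← ContinuousLinearMap.mul_def] at hU1 hU2 hU3 hU4 hT1 hT2 hT3 hT4 hX1 hX2 hX3 hX4 ⊢
  rw [← mul_assoc] at hU1 hU2 hT1 hT2 hX1 hX2
  -- Step 1: T * Td = U * Ud (both are the orthogonal projection onto ran T = ran U)
  have hPQ : (T * Td) * (U * Ud) = U * Ud := by
    ext x
    obtain ⟨w, hw⟩ : U (Ud x) ∈ LinearMap.range (T : H →ₗ[ℂ] H) := by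
      rw [← hran]; exact ⟨Ud x, rfl⟩
    have h2 := congrFun (congrArg DFunLike.coe hT1) w
    simp only [ContinuousLinearMap.mul_apply] at h2 ⊢
    rw [← hw]
    exact h2
  have hQP : (U * Ud) * (T * Td) = T * Td := by
    ext x
    obtain ⟨w, hw⟩ : T (Td x) ∈ LinearMap.range (U : H →ₗ[ℂ] H) := by
      rw [hran]; exact ⟨Td x, rfl⟩
    have h2 := congrFun (congrArg DFunLike.coe hU1) w
    simp only [ContinuousLinearMap.mul_apply] at h2 ⊢
    rw [← hw]
    exact h2
  have hproj : T * Td = U * Ud := aux_proj_eq _ _ hT3 hU3 hPQ hQP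
  -- Step 2: Td * U is a Moore-Penrose inverse of A := Ud * T
  set A := Ud * T with hA
  have hAY : A * (Td * U) = Ud * U := by
    calc A * (Td * U) = Ud * (T * Td) * U := by rw [hA]; noncomm_ring
      _ = Ud * (U * Ud) * U := by rw [hproj]
      _ = (Ud * U * Ud) * U := by noncomm_ring
      _ = Ud * U := by rw [hU2]
  have hYA : (Td * U) * A = Td * T := by
    calc (Td * U) * A = Td * (U * Ud) * T := by rw [hA]; noncomm_ring
      _ = Td * (T * Td) * T := by rw [hproj]
      _ = (Td * T * Td) * T := by noncomm_ring
      _ = Td * T := by rw [hT2]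
  have hY1 : A * (Td * U) * A = A := by
    calc A * (Td * U) * A = (Ud * U) * A := by rw [hAY]
      _ = Ud * U * Ud * T := by rw [hA]; noncomm_ring
      _ = Ud * T := by rw [hU2]
      _ = A := hA.symm
  have hY2 : (Td * U) * A * (Td * U) = Td * U := by
    calc (Td * U) * A * (Td * U) = (Td * T) * (Td * U) := by rw [hYA]
      _ = Td * T * Td * U := by noncomm_ring
      _ = Td * U := by rw [hT2]
  have hY3 : star (A * (Td * U)) = A * (Td * U) := by rw [hAY]; exact hU4
  have hY4 : star ((Td * U) * A) = (Td * U) * A := by rw [hYA]; exact hT4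
  exact aux_mp_unique A X (Td * U) hX1 hX2 hX3 hX4 hY1 hY2 hY3 hY4
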